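/- If K_k = K_{k_1} ⊗ ... ⊗ K_{k_n} with K_0 = diag(1, √(1-p)), K_1 = √p|0⟩⟨1|, and k is a string of Hamming weight exactly 1, then K_k |W_n⟩⟨W_n| K_k^† = (p/n) |0^{⊗n}⟩⟨0^{⊗n}|. -/
import Mathlib


open Matrix

noncomputable def Wvec (n : ℕ) : (Fin n → Fin 2) → ℂ := fun x =>
  if (Finset.univ.filter fun i => x i = 1).card = 1 then ((Real.sqrt n)⁻¹ : ℝ) else 0

def outer {ι : Type*} (v : ι → ℂ) : Matrix ι ι ℂ :=
  Matrix.of fun x y => v x * star (v y)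

def vac (n : ℕ) : (Fin n → Fin 2) → ℂ := fun x =>
  if x = (fun _ => 0) then 1 else 0

def tensOp {m d : ℕ} (M : Fin m → Matrix (Fin d) (Fin d) ℂ) :
    Matrix (Fin m → Fin d) (Fin m → Fin d) ℂ :=
  Matrix.of fun x y => ∏ l, M l (x l) (y l)

/-- The amplitude damping Kraus operators `K_0 = diag(1, √(1-p))`, `K_1 = √p |0⟩⟨1|`. -/
noncomputable def Kr (p : ℝ) : Fin 2 → Matrix (Fin 2) (Fin 2) ℂ := fun i =>
  if i = 0 then !![1, 0; 0, (Real.sqrt (1 - p) : ℂ)]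
  else !![0, (Real.sqrt p : ℂ); 0, 0]


lemma conj_outer {ι : Type*} [Fintype ι] (M : Matrix ι ι ℂ) (v : ι → ℂ) :
    M * outer v * Mᴴ = outer (M.mulVec v) := by
  ext x y
  simp only [outer, Matrix.mul_apply, Matrix.conjTranspose_apply, Matrix.mulVec,
    dotProduct, Matrix.of_apply, star_sum, star_mul', Finset.sum_mul, Finset.mul_sum]
  exact Finset.sum_congr rfl fun i _ => Finset.sum_congr rfl fun j _ => by ring

lemma outer_smul {ι : Type*} (c : ℂ) (v : ι → ℂ) :
    outer (c • v) = (c * star c) • outer v := by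
  ext x y
  simp [outer, Matrix.smul_apply]
  ring

lemma fin2_eq_zero {a : Fin 2} (h : a ≠ 1) : a = 0 := by fin_cases a <;> simp_all
lemma fin2_eq_one {a : Fin 2} (h : a ≠ 0) : a = 1 := by fin_cases a <;> simp_all

lemma Kr_c10 (p : ℝ) (c : Fin 2) : Kr p c 1 0 = 0 := by fin_cases c <;> simp [Kr]
lemma Kr_1a0 (p : ℝ) (a : Fin 2) : Kr p 1 a 0 = 0 := by fin_cases a <;> simp [Kr]
lemma Kr_111 (p : ℝ) : Kr p 1 1 1 = 0 := by simp [Kr]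
lemma Kr_101 (p : ℝ) : Kr p 1 0 1 = (Real.sqrt p : ℂ) := by simp [Kr]
lemma Kr_000 (p : ℝ) : Kr p 0 0 0 = 1 := by simp [Kr]

lemma mulVec_W (n : ℕ) (p : ℝ) (k : Fin n → Fin 2)
    (hk : (Finset.univ.filter fun l => k l = 1).card = 1) :
    (tensOp fun l => Kr p (k l)).mulVec (Wvec n)
      = (((Real.sqrt p / Real.sqrt n : ℝ)) : ℂ) • vac n := by
  obtain ⟨j, hj⟩ := Finset.card_eq_one.mp hk
  have hkl : ∀ l, k l = 1 ↔ l = j := fun l => by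
    simpa using Finset.ext_iff.mp hj l
  set e : Fin n → Fin 2 := fun l => if l = j then 1 else 0 with he
  have hWe : Wvec n e = ((Real.sqrt n)⁻¹ : ℝ) := by
    have : (Finset.univ.filter fun i => e i = 1) = {j} := by
      ext l; simp [he]
    simp [Wvec, this]
  funext x
  by_cases hx : x = fun _ => 0
  · subst hx
    rw [Matrix.mulVec, dotProduct, Finset.sum_eq_single e]
    · have hprod : tensOp (fun l => Kr p (k l)) (fun _ => 0) e = (Real.sqrt p : ℂ) := by
        rw [tensOp, Matrix.of_apply, Finset.prod_eq_single j]
        · rw [(hkl j).mpr rfl]; simp [he, Kr_101]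
        · intro l _ hl
          rw [fin2_eq_zero (fun h => hl ((hkl l).mp h))]
          simp [he, hl, Kr_000]
        · simp
      rw [hprod, hWe]
      simp [vac, div_eq_mul_inv]
    · intro y _ hy
      by_cases hw : (Finset.univ.filter fun i => y i = 1).card = 1
      · obtain ⟨i, hi⟩ := Finset.card_eq_one.mp hw
        have hyl : ∀ l, y l = 1 ↔ l = i := fun l => by
          simpa using Finset.ext_iff.mp hi l
        have hij : i ≠ j := by
          rintro rfl
          apply hy
          funext l
          by_cases hl : l = i
          · subst hl; simp [he, (hyl l).mpr rfl]
          · rw [fin2_eq_zero (fun h => hl ((hyl l).mp h))]; simp [he, hl]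
        have : tensOp (fun l => Kr p (k l)) (fun _ => 0) y = 0 := by
          apply Finset.prod_eq_zero (Finset.mem_univ j)
          simp only [(hkl j).mpr rfl, fin2_eq_zero (fun h => hij ((hyl j).mp h).symm)]
          exact Kr_1a0 p 0
        rw [this, zero_mul]
      · simp [Wvec, hw]
    · simp
  · have h0 : ∀ y : Fin n → Fin 2,
        tensOp (fun l => Kr p (k l)) x y * Wvec n y = 0 := by
      intro y
      by_cases hw : (Finset.univ.filter fun i => y i = 1).card = 1
      · obtain ⟨i, hi⟩ := Finset.card_eq_one.mp hw
        have hyl : ∀ l, y l = 1 ↔ l = i := fun l => by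
          simpa using Finset.ext_iff.mp hi l
        obtain ⟨m, hm⟩ : ∃ m, x m ≠ 0 := by
          by_contra h
          push_neg at h
          exact hx (funext h)
        have hxm : x m = 1 := fin2_eq_one hm
        have : tensOp (fun l => Kr p (k l)) x y = 0 := by
          by_cases hmi : m = i
          · subst hmi
            by_cases hmj : m = j
            · apply Finset.prod_eq_zero (Finset.mem_univ m)
              simp only [(hkl m).mpr hmj, hxm, (hyl m).mpr rfl]
              exact Kr_111 p
            · apply Finset.prod_eq_zero (Finset.mem_univ j)
              simp only [(hkl j).mpr rfl,
                fin2_eq_zero (show y j ≠ 1 from fun h => hmj ((hyl j).mp h).symm)]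
              exact Kr_1a0 p _
          · apply Finset.prod_eq_zero (Finset.mem_univ m)
            simp only [hxm, fin2_eq_zero (show y m ≠ 1 from fun h => hmi ((hyl m).mp h))]
            exact Kr_c10 p _
        rw [this, zero_mul]
      · simp [Wvec, hw]
    rw [Matrix.mulVec, dotProduct, Finset.sum_eq_zero fun y _ => h0 y]
    simp [vac, hx]


/-- If the Kraus index string `k` has Hamming weight exactly 1, then
`K_k |W_n⟩⟨W_n| K_k† = (p/n)|0…0⟩⟨0…0|`. -/
theorem stmt10 (n : ℕ) (p : ℝ) (hp0 : 0 ≤ p) (hp1 : p ≤ 1)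
    (k : Fin n → Fin 2)
    (hk : (Finset.univ.filter fun l => k l = 1).card = 1) :
    (tensOp fun l => Kr p (k l)) * outer (Wvec n) * (tensOp fun l => Kr p (k l))ᴴ
      = (((p : ℝ) : ℂ) / (n : ℂ)) • outer (vac n) := by
  rw [conj_outer, mulVec_W n p k hk, outer_smul]
  congr 1
  rw [Complex.star_def, Complex.conj_ofReal, ← Complex.ofReal_mul,
    div_mul_div_comm, Real.mul_self_sqrt hp0, Real.mul_self_sqrt (Nat.cast_nonneg n)]
  push_cast
  ring
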